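/- Fix real numbers ξ, θ and 0 < σ_min < σ_max. For N ≥ 2 let σᵢ = σ_min + ((i−1)/(N−1))·(σ_max − σ_min), Δσ = (σ_max − σ_min)/(N−1), Dᵢᴺ(θ, θ⁻) = (σ_min/σᵢ₊₁)ξ + (1 − σ_min/σᵢ₊₁)θ − (σ_min/σᵢ)ξ − (1 − σ_min/σᵢ)θ⁻, and Gᴺ(θ, θ⁻) = (2/(N−1))·Σ_{i=1}^{N−1} Dᵢᴺ(θ, θ⁻)·(1 − σ_min/σᵢ₊₁). Then lim_{N→∞} (1/Δσ)·Gᴺ(θ, θ) = (2(θ − ξ)/(σ_max − σ_min)) · ∫_{σ_min}^{σ_max} (σ_min/σ²)(1 − σ_min/σ) dσ, i.e. the scaled gradient converges to the derivative at θ of θ ↦ ((θ − ξ)²/(σ_max − σ_min))·∫_{σ_min}^{σ_max} (σ_min/σ²)(1 − σ_min/σ) dσ. -/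

import Mathlib

open Filter Finset

/-- The `i`-th noise level of the uniform discretization with `N` steps. -/
noncomputable def sigmaLvl (σmin σmax : ℝ) (N i : ℕ) : ℝ :=
  σmin + (((i : ℝ) - 1) / ((N : ℝ) - 1)) * (σmax - σmin)

/-- The difference `Dᵢᴺ(θ, θ⁻)` of student and teacher outputs in the toy model. -/
noncomputable def Dtoy (ξ θ θm σmin σmax : ℝ) (N i : ℕ) : ℝ :=
  (σmin / sigmaLvl σmin σmax N (i + 1)) * ξ + (1 - σmin / sigmaLvl σmin σmax N (i + 1)) * θ
    - (σmin / sigmaLvl σmin σmax N i) * ξ - (1 - σmin / sigmaLvl σmin σmax N i) * θm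

/-- The gradient `Gᴺ(θ, θ⁻)` of the toy consistency loss in `θ`. -/
noncomputable def Gtoy (ξ θ θm σmin σmax : ℝ) (N : ℕ) : ℝ :=
  (2 / ((N : ℝ) - 1)) * ∑ i ∈ Finset.Icc 1 (N - 1),
    Dtoy ξ θ θm σmin σmax N i * (1 - σmin / sigmaLvl σmin σmax N (i + 1))

lemma tele_aux (f : ℕ → ℝ) {N : ℕ} (hN : 2 ≤ N) :
    ∑ i ∈ Finset.Icc 1 (N - 1), (f i - f (i + 1)) = f 1 - f N := by
  have hIcc : Finset.Icc 1 (N - 1) = Finset.Ico 1 N := by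
    rw [← Finset.Ico_add_one_right_eq_Icc]
    congr 1
    omega
  rw [hIcc, Finset.sum_Ico_eq_sum_range]
  have := Finset.sum_range_sub' (fun j => f (1 + j)) (N - 1)
  simpa [show 1 + (N - 1) = N by omega, add_assoc] using this

lemma sigma_one (σmin σmax : ℝ) (N : ℕ) : sigmaLvl σmin σmax N 1 = σmin := by
  simp [sigmaLvl]

lemma sigma_top (σmin σmax : ℝ) {N : ℕ} (hN : 2 ≤ N) : sigmaLvl σmin σmax N N = σmax := by
  have hne : (N : ℝ) - 1 ≠ 0 := by
    have : (2 : ℝ) ≤ (N : ℝ) := by exact_mod_cast hN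
    linarith
  simp only [sigmaLvl]; rw [div_self hne]; ring

lemma sigma_lb (σmin σmax : ℝ) (h0 : 0 < σmin) (h1 : σmin < σmax) {N i : ℕ}
    (hN : 2 ≤ N) (hi : 1 ≤ i) : σmin ≤ sigmaLvl σmin σmax N i := by
  have h2 : (2 : ℝ) ≤ (N : ℝ) := by exact_mod_cast hN
  have h1' : (1 : ℝ) ≤ (i : ℝ) := by exact_mod_cast hi
  have : 0 ≤ (((i : ℝ) - 1) / ((N : ℝ) - 1)) * (σmax - σmin) :=
    mul_nonneg (div_nonneg (by linarith) (by linarith)) (by linarith)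
  simp only [sigmaLvl]; linarith

lemma sigma_pos (σmin σmax : ℝ) (h0 : 0 < σmin) (h1 : σmin < σmax) {N i : ℕ}
    (hN : 2 ≤ N) (hi : 1 ≤ i) : 0 < sigmaLvl σmin σmax N i :=
  lt_of_lt_of_le h0 (sigma_lb σmin σmax h0 h1 hN hi)

lemma sigma_step (σmin σmax : ℝ) {N : ℕ} (hN : 2 ≤ N) (i : ℕ) :
    sigmaLvl σmin σmax N (i + 1) - sigmaLvl σmin σmax N i
      = (σmax - σmin) / ((N : ℝ) - 1) := by
  have hne : (N : ℝ) - 1 ≠ 0 := by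
    have : (2 : ℝ) ≤ (N : ℝ) := by exact_mod_cast hN
    linarith
  simp only [sigmaLvl]
  push_cast
  field_simp
  ring

lemma key_identity (ξ θ σmin σmax : ℝ) (h0 : 0 < σmin) (h1 : σmin < σmax) {N : ℕ}
    (hN : 2 ≤ N) :
    (1 / ((σmax - σmin) / ((N : ℝ) - 1))) * Gtoy ξ θ θ σmin σmax N
      = 2 * (θ - ξ) / (σmax - σmin) *
        ((1 - σmin / σmax - 1 / 2 + σmin ^ 2 / (2 * σmax ^ 2))
          + σmin ^ 2 / 2 * ∑ i ∈ Finset.Icc 1 (N - 1),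
              ((sigmaLvl σmin σmax N i)⁻¹ - (sigmaLvl σmin σmax N (i + 1))⁻¹) ^ 2) := by
  have hne : (N : ℝ) - 1 ≠ 0 := by
    have : (2 : ℝ) ≤ (N : ℝ) := by exact_mod_cast hN
    linarith
  have hmin : σmin ≠ 0 := h0.ne'
  have hmax : σmax ≠ 0 := (h0.trans h1).ne'
  have hd : σmax - σmin ≠ 0 := sub_ne_zero.mpr h1.ne'
  have hterm : ∀ i ∈ Finset.Icc 1 (N - 1),
      Dtoy ξ θ θ σmin σmax N i * (1 - σmin / sigmaLvl σmin σmax N (i + 1))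
        = σmin * (θ - ξ) *
            (((sigmaLvl σmin σmax N i)⁻¹ - (sigmaLvl σmin σmax N (i + 1))⁻¹)
              - σmin / 2 * (((sigmaLvl σmin σmax N i)⁻¹) ^ 2 - ((sigmaLvl σmin σmax N (i + 1))⁻¹) ^ 2)
              + σmin / 2 * ((sigmaLvl σmin σmax N i)⁻¹ - (sigmaLvl σmin σmax N (i + 1))⁻¹) ^ 2) := by
    intro i _
    simp only [Dtoy, div_eq_mul_inv]
    ring
  have hsum : ∑ i ∈ Finset.Icc 1 (N - 1),
      Dtoy ξ θ θ σmin σmax N i * (1 - σmin / sigmaLvl σmin σmax N (i + 1))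
        = σmin * (θ - ξ) *
            ((σmin⁻¹ - σmax⁻¹) - σmin / 2 * ((σmin⁻¹) ^ 2 - (σmax⁻¹) ^ 2)
              + σmin / 2 * ∑ i ∈ Finset.Icc 1 (N - 1),
                  ((sigmaLvl σmin σmax N i)⁻¹ - (sigmaLvl σmin σmax N (i + 1))⁻¹) ^ 2) := by
    rw [Finset.sum_congr rfl hterm, ← Finset.mul_sum]
    congr 1
    rw [Finset.sum_add_distrib, Finset.sum_sub_distrib, ← Finset.mul_sum, ← Finset.mul_sum,
      tele_aux (fun i => (sigmaLvl σmin σmax N i)⁻¹) hN,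
      tele_aux (fun i => ((sigmaLvl σmin σmax N i)⁻¹) ^ 2) hN,
      sigma_one, sigma_top σmin σmax hN]
  simp only [Gtoy, hsum]
  field_simp
  ring

lemma integral_value (σmin σmax : ℝ) (h0 : 0 < σmin) (h1 : σmin < σmax) :
    (∫ s in σmin..σmax, (σmin / s ^ 2) * (1 - σmin / s))
      = 1 - σmin / σmax - 1 / 2 + σmin ^ 2 / (2 * σmax ^ 2) := by
  have hne : ∀ s ∈ Set.uIcc σmin σmax, s ≠ 0 := by
    intro s hs
    rw [Set.uIcc_of_le h1.le] at hs
    exact (lt_of_lt_of_le h0 hs.1).ne'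
  have hderiv : ∀ s ∈ Set.uIcc σmin σmax,
      HasDerivAt (fun s : ℝ => -σmin * s⁻¹ + σmin ^ 2 / 2 * (s ^ 2)⁻¹)
        ((σmin / s ^ 2) * (1 - σmin / s)) s := by
    intro s hs
    have hs0 := hne s hs
    have hd1 : HasDerivAt (fun s : ℝ => s⁻¹) (-(s ^ 2)⁻¹) s := hasDerivAt_inv hs0
    have hd2 : HasDerivAt (fun s : ℝ => (s ^ 2)⁻¹) (-(2 * s ^ 1) / (s ^ 2) ^ 2) s := by
      have := (hasDerivAt_pow 2 s).inv (pow_ne_zero 2 hs0)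
      exact this.congr_deriv (by norm_num)
    have h := (hd1.const_mul (-σmin)).add (hd2.const_mul (σmin ^ 2 / 2))
    refine h.congr_deriv ?_
    field_simp
    ring
  have hint : IntervalIntegrable (fun s : ℝ => (σmin / s ^ 2) * (1 - σmin / s))
      MeasureTheory.volume σmin σmax := by
    apply ContinuousOn.intervalIntegrable
    apply ContinuousOn.mul
    · exact continuousOn_const.div (continuousOn_pow 2)
        (fun s hs => pow_ne_zero 2 (hne s hs))
    · exact continuousOn_const.sub (continuousOn_const.div continuousOn_id hne)
  rw [intervalIntegral.integral_eq_sub_of_hasDerivAt hderiv hint]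
  have hmax : σmax ≠ 0 := (h0.trans h1).ne'
  field_simp
  ring

/-- Proposition 1, equation (7), case `θ⁻ = θ`: the gradient scaled by `1/Δσ`
converges to the derivative at `θ` of
`θ ↦ ((θ − ξ)²/(σmax − σmin)) ∫_{σmin}^{σmax} (σmin/σ²)(1 − σmin/σ) dσ`. -/
theorem scaled_gradient_limit_teacher_eq_student (ξ θ σmin σmax : ℝ)
    (h0 : 0 < σmin) (h1 : σmin < σmax) :
    Tendsto (fun N : ℕ =>
        (1 / ((σmax - σmin) / ((N : ℝ) - 1))) * Gtoy ξ θ θ σmin σmax N) atTop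
      (nhds (2 * (θ - ξ) / (σmax - σmin) *
        ∫ s in σmin..σmax, (σmin / s ^ 2) * (1 - σmin / s))) := by
  rw [integral_value σmin σmax h0 h1]
  set T : ℕ → ℝ := fun N => ∑ i ∈ Finset.Icc 1 (N - 1),
      ((sigmaLvl σmin σmax N i)⁻¹ - (sigmaLvl σmin σmax N (i + 1))⁻¹) ^ 2 with hT
  have hT0 : Tendsto T atTop (nhds 0) := by
    apply squeeze_zero' (g := fun N : ℕ => (σmax - σmin) ^ 2 / σmin ^ 4 / ((N : ℝ) - 1))
    · exact Filter.Eventually.of_forall fun N =>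
        Finset.sum_nonneg fun i _ => sq_nonneg _
    · filter_upwards [eventually_ge_atTop 2] with N hN
      have hne : (N : ℝ) - 1 ≠ 0 := by
        have : (2 : ℝ) ≤ (N : ℝ) := by exact_mod_cast hN
        linarith
      have hΔ : 0 < (σmax - σmin) / ((N : ℝ) - 1) := by
        have : (2 : ℝ) ≤ (N : ℝ) := by exact_mod_cast hN
        apply div_pos (by linarith) (by linarith)
      have hb : ∀ i ∈ Finset.Icc 1 (N - 1),
          ((sigmaLvl σmin σmax N i)⁻¹ - (sigmaLvl σmin σmax N (i + 1))⁻¹) ^ 2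
            ≤ ((σmax - σmin) / ((N : ℝ) - 1) / σmin ^ 2) ^ 2 := by
        intro i hi
        rw [Finset.mem_Icc] at hi
        have hi1 : 1 ≤ i := hi.1
        have ha := sigma_pos σmin σmax h0 h1 hN hi1
        have hb' := sigma_pos σmin σmax h0 h1 hN (by omega : 1 ≤ i + 1)
        have hla := sigma_lb σmin σmax h0 h1 hN hi1
        have hlb := sigma_lb σmin σmax h0 h1 hN (by omega : 1 ≤ i + 1)
        have heq : (sigmaLvl σmin σmax N i)⁻¹ - (sigmaLvl σmin σmax N (i + 1))⁻¹
            = (σmax - σmin) / ((N : ℝ) - 1) / (sigmaLvl σmin σmax N i * sigmaLvl σmin σmax N (i + 1)) := by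
          rw [inv_sub_inv ha.ne' hb'.ne', sigma_step σmin σmax hN i]
        rw [heq]
        have h1' : 0 ≤ (σmax - σmin) / ((N : ℝ) - 1)
            / (sigmaLvl σmin σmax N i * sigmaLvl σmin σmax N (i + 1)) :=
          le_of_lt (div_pos hΔ (mul_pos ha hb'))
        have h2' : (σmax - σmin) / ((N : ℝ) - 1)
            / (sigmaLvl σmin σmax N i * sigmaLvl σmin σmax N (i + 1))
            ≤ (σmax - σmin) / ((N : ℝ) - 1) / σmin ^ 2 := by
          apply div_le_div_of_nonneg_left hΔ.le (by positivity)
          calc σmin ^ 2 = σmin * σmin := sq σmin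
            _ ≤ sigmaLvl σmin σmax N i * sigmaLvl σmin σmax N (i + 1) :=
              mul_le_mul hla hlb h0.le ha.le
        exact pow_le_pow_left₀ h1' h2' 2
      calc T N ≤ ∑ _i ∈ Finset.Icc 1 (N - 1),
            ((σmax - σmin) / ((N : ℝ) - 1) / σmin ^ 2) ^ 2 := Finset.sum_le_sum hb
        _ = ((N : ℝ) - 1) * ((σmax - σmin) / ((N : ℝ) - 1) / σmin ^ 2) ^ 2 := by
            rw [Finset.sum_const, Nat.card_Icc]
            have : ((N - 1 + 1 - 1 : ℕ) : ℝ) = (N : ℝ) - 1 := by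
              have : N - 1 + 1 - 1 = N - 1 := by omega
              rw [this, Nat.cast_sub (by omega)]
              norm_num
            rw [nsmul_eq_mul, this]
        _ = (σmax - σmin) ^ 2 / σmin ^ 4 / ((N : ℝ) - 1) := by
            field_simp
    · have hdiv : Tendsto (fun N : ℕ => ((N : ℝ) - 1)) atTop atTop := by
        simpa [sub_eq_add_neg] using
          tendsto_atTop_add_const_right atTop (-1 : ℝ) tendsto_natCast_atTop_atTop
      exact Tendsto.div_atTop tendsto_const_nhds hdiv
  have hlim : Tendsto (fun N : ℕ => 2 * (θ - ξ) / (σmax - σmin) *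
      ((1 - σmin / σmax - 1 / 2 + σmin ^ 2 / (2 * σmax ^ 2)) + σmin ^ 2 / 2 * T N)) atTop
      (nhds (2 * (θ - ξ) / (σmax - σmin) *
        (1 - σmin / σmax - 1 / 2 + σmin ^ 2 / (2 * σmax ^ 2)))) := by
    have := tendsto_const_nhds (x := (2 * (θ - ξ) / (σmax - σmin) : ℝ)) (f := atTop (α := ℕ))
    have h2 : Tendsto (fun N : ℕ =>
        (1 - σmin / σmax - 1 / 2 + σmin ^ 2 / (2 * σmax ^ 2)) + σmin ^ 2 / 2 * T N) atTop
        (nhds ((1 - σmin / σmax - 1 / 2 + σmin ^ 2 / (2 * σmax ^ 2)) + σmin ^ 2 / 2 * 0)) :=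
      tendsto_const_nhds.add (tendsto_const_nhds.mul hT0)
    have := this.mul h2
    simpa using this
  apply hlim.congr'
  filter_upwards [eventually_ge_atTop 2] with N hN
  exact (key_identity ξ θ σmin σmax h0 h1 hN).symm
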